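/- Let d ≥ 2 and let k ∈ ℝ^d satisfy cos k₁ = cos k₂ = ⋯ = cos k_d = c for some c ∈ (−1,1). Then, with φ(k) = arccos((1/d)Σ_j cos k_j): each partial derivative satisfies ∂φ/∂k_j (k) = sin k_j/(d sin φ(k)) ∈ {−1/d, +1/d}, so that ∇φ(k) is one of the 2^d vertices of the cube {−1/d, 1/d}^d inscribed in the sphere of radius 1/√d; and the Hessian matrix of φ at k is singular: det(Hess φ)(k) = 0. -/

import Mathlib

open Finset

/-- `φ(k) = arccos((1/d) ∑_j cos k_j)`, the arccosine of the Fourier symbol of the simple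
random walk on `ℤ^d`. -/
noncomputable def rwPhase (d : ℕ) (k : Fin d → ℝ) : ℝ :=
  Real.arccos ((1 / (d : ℝ)) * ∑ j, Real.cos (k j))

/-- the Hessian matrix of a function on `ℝ^d`, with entries the iterated directional
derivatives along the standard basis vectors -/
noncomputable def hessian (d : ℕ) (f : (Fin d → ℝ) → ℝ) (k : Fin d → ℝ) :
    Matrix (Fin d) (Fin d) ℝ :=
  Matrix.of fun l m =>
    fderiv ℝ (fun k' => fderiv ℝ f k' (Pi.single m 1)) k (Pi.single l 1)

/-- the symbol `S(k) = (1/d) ∑_j cos k_j` -/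
noncomputable def Ssum (d : ℕ) (k : Fin d → ℝ) : ℝ := (1 / (d : ℝ)) * ∑ j, Real.cos (k j)

/-- the gradient of `Ssum` as a continuous linear map -/
noncomputable def Lgrad (d : ℕ) (k : Fin d → ℝ) : (Fin d → ℝ) →L[ℝ] ℝ :=
  ∑ j, (-Real.sin (k j) / d) • (ContinuousLinearMap.proj j : (Fin d → ℝ) →L[ℝ] ℝ)

lemma Lgrad_apply (d : ℕ) (k : Fin d → ℝ) (m : Fin d) :
    Lgrad d k (Pi.single m 1) = -Real.sin (k m) / d := by
  simp [Lgrad, ContinuousLinearMap.sum_apply, Pi.single_apply]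

lemma hasFDerivAt_Ssum (d : ℕ) (k : Fin d → ℝ) :
    HasFDerivAt (Ssum d) (Lgrad d k) k := by
  have h1 : ∀ j : Fin d, HasFDerivAt (fun k' : Fin d → ℝ => Real.cos (k' j))
      ((-Real.sin (k j)) • (ContinuousLinearMap.proj j : (Fin d → ℝ) →L[ℝ] ℝ)) k :=
    fun j => by
      have hp : HasFDerivAt (fun k' : Fin d → ℝ => k' j)
          (ContinuousLinearMap.proj j : (Fin d → ℝ) →L[ℝ] ℝ) k :=
        (ContinuousLinearMap.proj j : (Fin d → ℝ) →L[ℝ] ℝ).hasFDerivAt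
      exact (Real.hasDerivAt_cos (k j)).comp_hasFDerivAt k hp
  have hsum : HasFDerivAt (fun k' : Fin d → ℝ => ∑ j, Real.cos (k' j))
      (∑ j, (-Real.sin (k j)) • (ContinuousLinearMap.proj j : (Fin d → ℝ) →L[ℝ] ℝ)) k :=
    HasFDerivAt.fun_sum (fun j _ => h1 j)
  have h2 := hsum.const_mul (1 / (d : ℝ))
  have h3 : Lgrad d k = (1 / (d : ℝ)) •
      ∑ j, (-Real.sin (k j)) • (ContinuousLinearMap.proj j : (Fin d → ℝ) →L[ℝ] ℝ) := by
    rw [Finset.smul_sum]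
    refine Finset.sum_congr rfl fun j _ => ?_
    rw [smul_smul]
    congr 1
    ring
  rw [h3]
  exact h2

lemma sqrt_pos_of_lt {s : ℝ} (h1 : -1 < s) (h2 : s < 1) : 0 < Real.sqrt (1 - s ^ 2) :=
  Real.sqrt_pos.mpr (by nlinarith)

lemma hasFDerivAt_rwPhase {d : ℕ} {k : Fin d → ℝ}
    (h1 : -1 < Ssum d k) (h2 : Ssum d k < 1) :
    HasFDerivAt (rwPhase d)
      ((-(1 / Real.sqrt (1 - Ssum d k ^ 2))) • Lgrad d k) k :=
  (Real.hasDerivAt_arccos (ne_of_gt h1) (ne_of_lt h2)).comp_hasFDerivAt k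
    (hasFDerivAt_Ssum d k)

/-- explicit formula for the `m`-th partial derivative of `rwPhase` -/
noncomputable def gradFun (d : ℕ) (m : Fin d) (k' : Fin d → ℝ) : ℝ :=
  Real.sin (k' m) / ((d : ℝ) * Real.sqrt (1 - Ssum d k' ^ 2))

lemma fderiv_rwPhase_apply {d : ℕ} {k : Fin d → ℝ} (hd : (d : ℝ) ≠ 0)
    (h1 : -1 < Ssum d k) (h2 : Ssum d k < 1) (m : Fin d) :
    fderiv ℝ (rwPhase d) k (Pi.single m 1) = gradFun d m k := by
  rw [(hasFDerivAt_rwPhase h1 h2).fderiv]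
  have hs := (sqrt_pos_of_lt h1 h2).ne'
  simp only [ContinuousLinearMap.smul_apply, Lgrad_apply, smul_eq_mul, gradFun]
  rw [eq_div_iff (mul_ne_zero hd hs)]
  field_simp

lemma continuous_Ssum (d : ℕ) : Continuous (Ssum d) := by
  unfold Ssum
  exact continuous_const.mul (continuous_finset_sum _ fun j _ =>
    Real.continuous_cos.comp (continuous_apply j))

lemma fderiv_eventuallyEq {d : ℕ} (hd : (d : ℝ) ≠ 0) {k : Fin d → ℝ}
    (h1 : -1 < Ssum d k) (h2 : Ssum d k < 1) (m : Fin d) :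
    (fun k' => fderiv ℝ (rwPhase d) k' (Pi.single m 1)) =ᶠ[nhds k] gradFun d m := by
  have hopen : IsOpen (Ssum d ⁻¹' Set.Ioo (-1) 1) := isOpen_Ioo.preimage (continuous_Ssum d)
  have hmem : Ssum d ⁻¹' Set.Ioo (-1) 1 ∈ nhds k := hopen.mem_nhds ⟨h1, h2⟩
  filter_upwards [hmem] with k' hk'
  exact fderiv_rwPhase_apply hd hk'.1 hk'.2 m

lemma hasDerivAt_invWeight {d : ℕ} (hd : (d : ℝ) ≠ 0) {s : ℝ}
    (h1 : -1 < s) (h2 : s < 1) :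
    HasDerivAt (fun t : ℝ => ((d : ℝ) * Real.sqrt (1 - t ^ 2))⁻¹)
      (s / ((d : ℝ) * ((1 - s ^ 2) * Real.sqrt (1 - s ^ 2)))) s := by
  have hpos : 0 < 1 - s ^ 2 := by nlinarith
  have hs : Real.sqrt (1 - s ^ 2) ≠ 0 := (sqrt_pos_of_lt h1 h2).ne'
  have ht : HasDerivAt (fun t : ℝ => 1 - t ^ 2) (-(2 * s)) s := by
    have h := (hasDerivAt_pow 2 s).const_sub 1
    simpa using h
  have hsq : HasDerivAt (fun t : ℝ => Real.sqrt (1 - t ^ 2))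
      (1 / (2 * Real.sqrt (1 - s ^ 2)) * -(2 * s)) s :=
    (Real.hasDerivAt_sqrt hpos.ne').comp s ht
  have hm := hsq.const_mul (d : ℝ)
  have hq := hm.fun_inv (mul_ne_zero hd hs)
  refine hq.congr_deriv ?_
  have h9 : Real.sqrt (1 - s ^ 2) ^ 2 = 1 - s ^ 2 := Real.sq_sqrt hpos.le
  field_simp
  linear_combination (-s) * h9

lemma hasFDerivAt_gradFun {d : ℕ} (hd : (d : ℝ) ≠ 0) {k : Fin d → ℝ}
    (h1 : -1 < Ssum d k) (h2 : Ssum d k < 1) (m : Fin d) :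
    HasFDerivAt (gradFun d m)
      (Real.sin (k m) • ((Ssum d k /
          ((d : ℝ) * ((1 - Ssum d k ^ 2) * Real.sqrt (1 - Ssum d k ^ 2)))) • Lgrad d k)
        + ((d : ℝ) * Real.sqrt (1 - Ssum d k ^ 2))⁻¹ •
            (Real.cos (k m) • (ContinuousLinearMap.proj m : (Fin d → ℝ) →L[ℝ] ℝ))) k := by
  have hu : HasFDerivAt (fun k' : Fin d → ℝ => Real.sin (k' m))
      (Real.cos (k m) • (ContinuousLinearMap.proj m : (Fin d → ℝ) →L[ℝ] ℝ)) k := by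
    have hp : HasFDerivAt (fun k' : Fin d → ℝ => k' m)
        (ContinuousLinearMap.proj m : (Fin d → ℝ) →L[ℝ] ℝ) k :=
      (ContinuousLinearMap.proj m : (Fin d → ℝ) →L[ℝ] ℝ).hasFDerivAt
    exact (Real.hasDerivAt_sin (k m)).comp_hasFDerivAt k hp
  have hw : HasFDerivAt (fun k' : Fin d → ℝ => ((d : ℝ) * Real.sqrt (1 - Ssum d k' ^ 2))⁻¹)
      ((Ssum d k / ((d : ℝ) * ((1 - Ssum d k ^ 2) * Real.sqrt (1 - Ssum d k ^ 2)))) •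
        Lgrad d k) k :=
    (hasDerivAt_invWeight hd h1 h2).comp_hasFDerivAt k (hasFDerivAt_Ssum d k)
  have := hu.mul hw
  exact this

lemma hessian_entry {d : ℕ} (hd : (d : ℝ) ≠ 0) {k : Fin d → ℝ}
    (h1 : -1 < Ssum d k) (h2 : Ssum d k < 1) (l m : Fin d) :
    hessian d (rwPhase d) k l m
      = Real.sin (k m) * ((Ssum d k /
          ((d : ℝ) * ((1 - Ssum d k ^ 2) * Real.sqrt (1 - Ssum d k ^ 2))))
            * (-Real.sin (k l) / d))
        + ((d : ℝ) * Real.sqrt (1 - Ssum d k ^ 2))⁻¹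
            * (Real.cos (k m) * (if m = l then 1 else 0)) := by
  have hev := fderiv_eventuallyEq hd h1 h2 m
  have heq : fderiv ℝ (fun k' => fderiv ℝ (rwPhase d) k' (Pi.single m 1)) k
      = fderiv ℝ (gradFun d m) k := hev.fderiv_eq
  show fderiv ℝ (fun k' => fderiv ℝ (rwPhase d) k' (Pi.single m 1)) k (Pi.single l 1) = _
  rw [heq, (hasFDerivAt_gradFun hd h1 h2 m).fderiv]
  simp [Lgrad_apply, ContinuousLinearMap.add_apply, ContinuousLinearMap.smul_apply,
    Pi.single_apply, mul_comm]

/-- If `cos k₁ = ⋯ = cos k_d = c ∈ (−1,1)` (`d ≥ 2`), then every partial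
derivative of `φ` equals `sin k_j/(d sin φ(k)) ∈ {−1/d, +1/d}` — so `∇φ(k)` is a vertex of the
cube `{−1/d, 1/d}^d` inscribed in the sphere of radius `1/√d` — and the Hessian of `φ` at `k`
is singular: `det Hess φ (k) = 0`. -/
theorem rwPhase_singular_points (d : ℕ) (hd : 2 ≤ d) (k : Fin d → ℝ) (c : ℝ)
    (hc1 : -1 < c) (hc2 : c < 1) (hk : ∀ j, Real.cos (k j) = c) :
    (∀ j, fderiv ℝ (rwPhase d) k (Pi.single j 1)
        = Real.sin (k j) / (d * Real.sin (rwPhase d k)) ∧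
      (fderiv ℝ (rwPhase d) k (Pi.single j 1) = 1 / d ∨
        fderiv ℝ (rwPhase d) k (Pi.single j 1) = -(1 / d))) ∧
    (hessian d (rwPhase d) k).det = 0 := by
  have hd0 : (d : ℝ) ≠ 0 := Nat.cast_ne_zero.mpr (by omega)
  have hS : Ssum d k = c := by
    unfold Ssum
    simp only [hk, Finset.sum_const, card_univ, Fintype.card_fin, nsmul_eq_mul]
    field_simp
  have h1 : -1 < Ssum d k := by rw [hS]; exact hc1
  have h2 : Ssum d k < 1 := by rw [hS]; exact hc2
  have hpos : 0 < 1 - c ^ 2 := by nlinarith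
  have hsqp : 0 < Real.sqrt (1 - c ^ 2) := Real.sqrt_pos.mpr hpos
  have hsq : Real.sqrt (1 - c ^ 2) ^ 2 = 1 - c ^ 2 := Real.sq_sqrt hpos.le
  have hsinphi : Real.sin (rwPhase d k) = Real.sqrt (1 - c ^ 2) := by
    have hφ : rwPhase d k = Real.arccos c := by
      unfold rwPhase
      rw [show (1 / (d : ℝ)) * ∑ j, Real.cos (k j) = c from hS]
    rw [hφ, Real.sin_arccos]
  have hsin2 : ∀ j, Real.sin (k j) ^ 2 = 1 - c ^ 2 := fun j => by
    have h := Real.sin_sq_add_cos_sq (k j)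
    rw [hk j] at h; linarith
  constructor
  · intro j
    have hgrad : fderiv ℝ (rwPhase d) k (Pi.single j 1)
        = Real.sin (k j) / ((d : ℝ) * Real.sqrt (1 - c ^ 2)) := by
      rw [fderiv_rwPhase_apply hd0 h1 h2 j]
      unfold gradFun
      rw [hS]
    refine ⟨by rw [hgrad, hsinphi], ?_⟩
    have hcases : Real.sin (k j) = Real.sqrt (1 - c ^ 2)
        ∨ Real.sin (k j) = -Real.sqrt (1 - c ^ 2) := by
      have h : Real.sin (k j) ^ 2 = Real.sqrt (1 - c ^ 2) ^ 2 := by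
        rw [hsq]; exact hsin2 j
      exact sq_eq_sq_iff_eq_or_eq_neg.mp h
    rcases hcases with h | h
    · left; rw [hgrad, h]; field_simp
    · right; rw [hgrad, h]; field_simp
  · set v : Fin d → ℝ := fun m => Real.sin (k m) with hv
    have hvne : v ≠ 0 := by
      intro h0
      have hz : Real.sin (k ⟨0, by omega⟩) = 0 := congrFun h0 ⟨0, by omega⟩
      have h := hsin2 ⟨0, by omega⟩
      rw [hz] at h; nlinarith
    have hmul : (hessian d (rwPhase d) k).mulVec v = 0 := by
      funext l
      simp only [Matrix.mulVec, dotProduct, Pi.zero_apply]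
      have hterm : ∀ m ∈ Finset.univ, hessian d (rwPhase d) k l m * v m
          = (1 - c ^ 2) * (c / ((d : ℝ) * ((1 - c ^ 2) * Real.sqrt (1 - c ^ 2)))
              * (-Real.sin (k l) / d))
            + (if m = l then ((d : ℝ) * Real.sqrt (1 - c ^ 2))⁻¹ * (c * Real.sin (k l))
              else 0) := by
        intro m _
        rw [hessian_entry hd0 h1 h2 l m, hS, hk m, hv]
        have hm2 := hsin2 m
        by_cases hml : m = l
        · subst hml
          simp only [eq_self_iff_true, if_true]
          linear_combination (c / ((d : ℝ) * ((1 - c ^ 2) * Real.sqrt (1 - c ^ 2)))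
            * (-Real.sin (k m) / d)) * hm2
        · simp only [if_neg hml]
          linear_combination (c / ((d : ℝ) * ((1 - c ^ 2) * Real.sqrt (1 - c ^ 2)))
            * (-Real.sin (k l) / d)) * hm2
      rw [Finset.sum_congr rfl hterm, Finset.sum_add_distrib, Finset.sum_const,
        Finset.sum_ite_eq' Finset.univ l, card_univ, Fintype.card_fin]
      simp only [Finset.mem_univ, if_true, nsmul_eq_mul]
      field_simp
      ring
    exact Matrix.exists_mulVec_eq_zero_iff.mp ⟨v, hvne, hmul⟩
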